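/- arXiv:2106.15666 — 4 statements merged into one kernel-verified Lean document; each statement's English description precedes it below -/
import Mathlib

section
/- Let V be a finite index set, X and Z finite types, and A_v : X × Z → ℂ a complex core for each v ∈ V. The unnormalized distribution of the fully-decohered Born machine with cores A_v, namely P(x) = ∑_{z∈Z} ∏_{v∈V} A_v(x,z) · conj(A_v(x,z)), equals the unnormalized distribution U(x) = ∑_{z∈Z} ∏_{v∈V} φ_v(x,z) of the discrete undirected graphical model whose clique potentials are φ_v(x,z) = |A_v(x,z)|². Consequently, if ∑_{x∈X} P(x) > 0, the normalized probability distributions of the two models are identical: P(x)/∑_{x'} P(x') = U(x)/∑_{x'} U(x') for all x ∈ X. -/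
/-- Theorem 1 of the paper: The unnormalized distribution of a
fully-decohered Born machine with cores `A_v` equals the unnormalized distribution of
the discrete UGM with clique potentials `φ_v(x,z) = |A_v(x,z)|²`, and if the total mass
is positive, the normalized probability distributions of the two models coincide. -/
theorem fully_decohered_bm_eq_ugm
    {V X Z : Type*} [Fintype V] [Fintype X] [Fintype Z]
    (A : V → X × Z → ℂ) (φ : V → X × Z → ℝ)
    (hφ : ∀ v x z, φ v (x, z) = ‖A v (x, z)‖ ^ 2) :
    (∀ x : X,
      (∑ z : Z, ∏ v : V, A v (x, z) * (starRingEnd ℂ) (A v (x, z)))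
        = ((∑ z : Z, ∏ v : V, φ v (x, z) : ℝ) : ℂ)) ∧
    ((0 < ∑ x : X, (∑ z : Z, ∏ v : V, A v (x, z) * (starRingEnd ℂ) (A v (x, z))).re) →
      ∀ x : X,
        (∑ z : Z, ∏ v : V, A v (x, z) * (starRingEnd ℂ) (A v (x, z)))
            / (∑ x' : X, ∑ z : Z, ∏ v : V, A v (x', z) * (starRingEnd ℂ) (A v (x', z)))
          = (((∑ z : Z, ∏ v : V, φ v (x, z))
              / (∑ x' : X, ∑ z : Z, ∏ v : V, φ v (x', z)) : ℝ) : ℂ)) := by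
  have key : ∀ x : X,
      (∑ z : Z, ∏ v : V, A v (x, z) * (starRingEnd ℂ) (A v (x, z)))
        = ((∑ z : Z, ∏ v : V, φ v (x, z) : ℝ) : ℂ) := by
    intro x
    push_cast
    refine Finset.sum_congr rfl fun z _ => Finset.prod_congr rfl fun v _ => ?_
    rw [hφ, Complex.mul_conj]
    push_cast [Complex.sq_norm]
    rfl
  refine ⟨key, fun _ x => ?_⟩
  rw [key]
  push_cast
  congr 1
  exact Finset.sum_congr rfl fun x' _ => by rw [key x']; push_cast; rfl
end

section
/- Let V be a finite index set, X and Z finite types, φ_v : X × Z → ℝ≥0 nonnegative clique potentials, and θ_v : X × Z → ℝ arbitrary real-valued phase functions, for v ∈ V. Define complex cores A_v(x,z) = exp(2π i θ_v(x,z)) · √(φ_v(x,z)). Then the unnormalized distribution of the fully-decohered Born machine with cores A_v, P(x) = ∑_{z∈Z} ∏_{v∈V} A_v(x,z)·conj(A_v(x,z)), equals the unnormalized UGM distribution U(x) = ∑_{z∈Z} ∏_{v∈V} φ_v(x,z) for every x ∈ X; in particular the result is independent of the choice of the phases θ_v, and if ∑_x U(x) > 0 the normalized distributions coincide. -/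
/-- Corollary 2 of the paper: Defining Born machine cores
`A_v(x,z) = exp(2πi θ_v(x,z)) √(φ_v(x,z))` from UGM clique potentials `φ_v` and arbitrary
real phases `θ_v`, the fully-decohered Born machine with cores `A_v` has the same
unnormalized distribution as the UGM with potentials `φ_v`, independently of `θ_v`, and
the normalized distributions coincide whenever the total UGM mass is positive. -/
theorem ugm_as_fully_decohered_bm
    {V X Z : Type*} [Fintype V] [Fintype X] [Fintype Z]
    (φ : V → X × Z → NNReal) (θ : V → X × Z → ℝ) (A : V → X × Z → ℂ)
    (hA : ∀ v x z,
      A v (x, z) = Complex.exp (2 * Real.pi * Complex.I * (θ v (x, z) : ℂ))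
        * ((Real.sqrt (φ v (x, z)) : ℝ) : ℂ)) :
    (∀ x : X,
      (∑ z : Z, ∏ v : V, A v (x, z) * (starRingEnd ℂ) (A v (x, z)))
        = (((∑ z : Z, ∏ v : V, φ v (x, z) : NNReal) : ℝ) : ℂ)) ∧
    ((0 < ∑ x : X, ∑ z : Z, ∏ v : V, φ v (x, z)) →
      ∀ x : X,
        (∑ z : Z, ∏ v : V, A v (x, z) * (starRingEnd ℂ) (A v (x, z)))
            / (∑ x' : X, ∑ z : Z, ∏ v : V, A v (x', z) * (starRingEnd ℂ) (A v (x', z)))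
          = ((((∑ z : Z, ∏ v : V, φ v (x, z))
              / (∑ x' : X, ∑ z : Z, ∏ v : V, φ v (x', z)) : NNReal) : ℝ) : ℂ)) := by
  have key : ∀ v x z, A v (x, z) * (starRingEnd ℂ) (A v (x, z)) = ((φ v (x, z) : ℝ) : ℂ) := by
    intro v x z
    rw [hA, Complex.mul_conj]
    have h1 : Complex.normSq (Complex.exp (2 * Real.pi * Complex.I * (θ v (x, z) : ℂ))) = 1 := by
      rw [Complex.normSq_eq_norm_sq, Complex.norm_exp]
      have : (2 * Real.pi * Complex.I * (θ v (x, z) : ℂ)).re = 0 := by simp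
      rw [this, Real.exp_zero]; norm_num
    rw [Complex.normSq_mul, h1, one_mul, Complex.normSq_ofReal,
      Real.mul_self_sqrt (φ v (x, z)).coe_nonneg]
  have hP : ∀ x : X,
      (∑ z : Z, ∏ v : V, A v (x, z) * (starRingEnd ℂ) (A v (x, z)))
        = (((∑ z : Z, ∏ v : V, φ v (x, z) : NNReal) : ℝ) : ℂ) := by
    intro x
    push_cast
    exact Finset.sum_congr rfl fun z _ => Finset.prod_congr rfl fun v _ => key v x z
  refine ⟨hP, fun _ x => ?_⟩
  rw [hP]
  have : (∑ x' : X, ∑ z : Z, ∏ v : V, A v (x', z) * (starRingEnd ℂ) (A v (x', z)))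
      = (((∑ x' : X, ∑ z : Z, ∏ v : V, φ v (x', z) : NNReal) : ℝ) : ℂ) := by
    push_cast
    exact Finset.sum_congr rfl fun x' _ => by
      have := hP x'; push_cast at this; exact this
  rw [this]
  push_cast
  ring
end

section
/- Let V_A, V_B be finite index sets and X_A, X_B, H_A, H_B, Z_A, Z_B, Z_C finite types. Suppose A_v : X_A × H_A × Z_A × Z_C → ℂ for v ∈ V_A and B_w : X_B × H_B × Z_B × Z_C → ℂ for w ∈ V_B. Define the extended DBM distribution in which the decohered cut-set variable z_C is read out as a visible random variable: Q(x_A, x_B, z_C) = ∑_{z_A, z_B} ∑_{h_A, h_A'} ∑_{h_B, h_B'} (∏_{v∈V_A} A_v(x_A,h_A,z_A,z_C) · conj(A_v(x_A,h_A',z_A,z_C))) · (∏_{w∈V_B} B_w(x_B,h_B,z_B,z_C) · conj(B_w(x_B,h_B',z_B,z_C))). Then Q factorizes: Q(x_A,x_B,z_C) = f(x_A,z_C) · g(x_B,z_C), where f(x_A,z_C) = ∑_{z_A} |∑_{h_A} ∏_{v∈V_A} A_v(x_A,h_A,z_A,z_C)|² and g(x_B,z_C) = ∑_{z_B} |∑_{h_B}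 ∏_{w∈V_B} B_w(x_B,h_B,z_B,z_C)|² are nonnegative real-valued functions. -/
lemma dbm_aux {H : Type*} [Fintype H] (F : H → ℂ) :
    (∑ h : H, ∑ h' : H, F h * (starRingEnd ℂ) (F h'))
      = ((‖∑ h : H, F h‖) ^ 2 : ℝ) := by
  have : (∑ h : H, ∑ h' : H, F h * (starRingEnd ℂ) (F h'))
      = (∑ h : H, F h) * (starRingEnd ℂ) (∑ h' : H, F h') := by
    rw [map_sum, Finset.sum_mul_sum]
  rw [this, Complex.mul_conj, Complex.sq_norm]

/-- For a DBM whose cores split into two groups interacting only through a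
decohered cut-set variable `z_C` that is read out as a visible random variable, the
extended distribution `Q(x_A, x_B, z_C)` factorizes as a product
`f(x_A, z_C) · g(x_B, z_C)` of two nonnegative real-valued functions. -/
theorem dbm_cut_set_factorization
    {VA VB XA XB HA HB ZA ZB ZC : Type*}
    [Fintype VA] [Fintype VB] [Fintype XA] [Fintype XB]
    [Fintype HA] [Fintype HB] [Fintype ZA] [Fintype ZB] [Fintype ZC]
    (A : VA → XA × HA × ZA × ZC → ℂ) (B : VB → XB × HB × ZB × ZC → ℂ)
    (xA : XA) (xB : XB) (zC : ZC) :
    (∑ zA : ZA, ∑ zB : ZB, ∑ hA : HA, ∑ hA' : HA, ∑ hB : HB, ∑ hB' : HB,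
        (∏ v : VA, A v (xA, hA, zA, zC) * (starRingEnd ℂ) (A v (xA, hA', zA, zC))) *
        (∏ w : VB, B w (xB, hB, zB, zC) * (starRingEnd ℂ) (B w (xB, hB', zB, zC))))
      = (((∑ zA : ZA, ‖∑ hA : HA, ∏ v : VA, A v (xA, hA, zA, zC)‖ ^ 2) *
          (∑ zB : ZB, ‖∑ hB : HB, ∏ w : VB, B w (xB, hB, zB, zC)‖ ^ 2) : ℝ) : ℂ) ∧
    0 ≤ ∑ zA : ZA, ‖∑ hA : HA, ∏ v : VA, A v (xA, hA, zA, zC)‖ ^ 2 ∧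
    0 ≤ ∑ zB : ZB, ‖∑ hB : HB, ∏ w : VB, B w (xB, hB, zB, zC)‖ ^ 2 := by
  refine ⟨?_, Finset.sum_nonneg fun _ _ => sq_nonneg _,
    Finset.sum_nonneg fun _ _ => sq_nonneg _⟩
  have key : ∀ (zA : ZA) (zB : ZB),
      (∑ hA : HA, ∑ hA' : HA, ∑ hB : HB, ∑ hB' : HB,
        (∏ v : VA, A v (xA, hA, zA, zC) * (starRingEnd ℂ) (A v (xA, hA', zA, zC))) *
        (∏ w : VB, B w (xB, hB, zB, zC) * (starRingEnd ℂ) (B w (xB, hB', zB, zC))))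
      = ((‖∑ hA : HA, ∏ v : VA, A v (xA, hA, zA, zC)‖ ^ 2 : ℝ) : ℂ) *
        ((‖∑ hB : HB, ∏ w : VB, B w (xB, hB, zB, zC)‖ ^ 2 : ℝ) : ℂ) := by
    intro zA zB
    have e1 : ∀ hA hA' : HA,
        (∏ v : VA, A v (xA, hA, zA, zC) * (starRingEnd ℂ) (A v (xA, hA', zA, zC)))
        = (∏ v : VA, A v (xA, hA, zA, zC)) *
          (starRingEnd ℂ) (∏ v : VA, A v (xA, hA', zA, zC)) := by
      intro hA hA'; rw [Finset.prod_mul_distrib, map_prod]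
    have e2 : ∀ hB hB' : HB,
        (∏ w : VB, B w (xB, hB, zB, zC) * (starRingEnd ℂ) (B w (xB, hB', zB, zC)))
        = (∏ w : VB, B w (xB, hB, zB, zC)) *
          (starRingEnd ℂ) (∏ w : VB, B w (xB, hB', zB, zC)) := by
      intro hB hB'; rw [Finset.prod_mul_distrib, map_prod]
    simp only [e1, e2]
    rw [show (∑ hA : HA, ∑ hA' : HA, ∑ hB : HB, ∑ hB' : HB,
        ((∏ v : VA, A v (xA, hA, zA, zC)) *
          (starRingEnd ℂ) (∏ v : VA, A v (xA, hA', zA, zC))) *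
        ((∏ w : VB, B w (xB, hB, zB, zC)) *
          (starRingEnd ℂ) (∏ w : VB, B w (xB, hB', zB, zC))))
      = (∑ hA : HA, ∑ hA' : HA, (∏ v : VA, A v (xA, hA, zA, zC)) *
          (starRingEnd ℂ) (∏ v : VA, A v (xA, hA', zA, zC))) *
        (∑ hB : HB, ∑ hB' : HB, (∏ w : VB, B w (xB, hB, zB, zC)) *
          (starRingEnd ℂ) (∏ w : VB, B w (xB, hB', zB, zC))) from by
        simp_rw [Finset.sum_mul, Finset.mul_sum]]
    rw [dbm_aux, dbm_aux]
  calc (∑ zA : ZA, ∑ zB : ZB, ∑ hA : HA, ∑ hA' : HA, ∑ hB : HB, ∑ hB' : HB,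
        (∏ v : VA, A v (xA, hA, zA, zC) * (starRingEnd ℂ) (A v (xA, hA', zA, zC))) *
        (∏ w : VB, B w (xB, hB, zB, zC) * (starRingEnd ℂ) (B w (xB, hB', zB, zC))))
      = ∑ zA : ZA, ∑ zB : ZB,
        ((‖∑ hA : HA, ∏ v : VA, A v (xA, hA, zA, zC)‖ ^ 2 : ℝ) : ℂ) *
        ((‖∑ hB : HB, ∏ w : VB, B w (xB, hB, zB, zC)‖ ^ 2 : ℝ) : ℂ) := by
        simp_rw [key]
    _ = _ := by
        rw [← Finset.sum_mul_sum]
        push_cast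
        ring
end

section
/- Let V be a finite index set, X and H finite types, E a finite set of decohered edges with dimensions d : E → ℕ (d_e ≥ 1), Z = ∏_{e∈E} Fin d_e, and A_v : X × H × Z → ℂ complex cores for v ∈ V. Let f : E → V be any function assigning each decohered edge to a core, and define purification types P_v = ∏_{e ∈ f⁻¹{v}} Fin d_e and LPS cores C_v : X × (H × Z) × P_v → ℂ by C_v(x,(h,z),p) = A_v(x,h,z) if p_e = z_e for all e ∈ f⁻¹{v}, and C_v(x,(h,z),p) = 0 otherwise. Then the locally purified state with cores C_v has the same unnormalized distribution as the decohered Born machine with cores A_v: for all x ∈ X, ∑_{p ∈ ∏_{v∈V} P_v} |∑_{(h,z) ∈ H × Z} ∏_{v∈V} C_v(x,(h,z),p_v)|² = ∑_{z∈Z} |∑_{h∈H} ∏_{v∈V} A_v(x,h,z)|². In particular the purification dimension at node v is d^(v) = ∏_{e ∈ f⁻¹(v)} d_e. -/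
/-- Theorem 5 of the paper, DBM → LPS: Given a DBM with decohered edges `E`
of dimensions `d_e` and an assignment `f : E → V` of decohered edges to cores, the LPS
whose core at `v` carries the purification type `∏_{e ∈ f⁻¹{v}} Fin (d e)` (of dimension
`∏_{e ∈ f⁻¹(v)} d_e`) and whose values copy the decohered indices into the purification
indices has the same unnormalized distribution as the DBM. -/
theorem dbm_as_lps
    {V X H E : Type*} [Fintype V] [DecidableEq V] [Fintype X] [Fintype H]
    [Fintype E] [DecidableEq E]
    (d : E → ℕ) (hd : ∀ e, 1 ≤ d e)
    (A : V → X × H × ((e : E) → Fin (d e)) → ℂ)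
    (f : E → V)
    (C : (v : V) → X × (H × ((e : E) → Fin (d e)))
          × ((e : {e : E // f e = v}) → Fin (d e.1)) → ℂ)
    (hC : ∀ (v : V) (x : X) (h : H) (z : (e : E) → Fin (d e))
        (p : (e : {e : E // f e = v}) → Fin (d e.1)),
      C v (x, (h, z), p)
        = if ∀ e : {e : E // f e = v}, p e = z e.1 then A v (x, h, z) else 0) :
    ∀ x : X,
      (∑ p : (v : V) → ((e : {e : E // f e = v}) → Fin (d e.1)),
          ‖∑ hz : H × ((e : E) → Fin (d e)),
            ∏ v : V, C v (x, hz, p v)‖ ^ 2)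
        = ∑ z : (e : E) → Fin (d e),
            ‖∑ h : H, ∏ v : V, A v (x, h, z)‖ ^ 2 := by
  intro x
  have key : ∀ p : (v : V) → ((e : {e : E // f e = v}) → Fin (d e.1)),
      (∑ hz : H × ((e : E) → Fin (d e)), ∏ v : V, C v (x, hz, p v))
        = ∑ h : H, ∏ v : V, A v (x, h, fun e => p (f e) ⟨e, rfl⟩) := by
    intro p
    rw [Fintype.sum_prod_type]
    refine Finset.sum_congr rfl fun h _ => ?_
    rw [Finset.sum_eq_single (fun e => p (f e) ⟨e, rfl⟩ : (e : E) → Fin (d e))]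
    · refine Finset.prod_congr rfl fun v _ => ?_
      rw [hC, if_pos]
      rintro ⟨e, he⟩
      subst he
      rfl
    · intro z _ hz
      have hne : ∃ e, z e ≠ p (f e) ⟨e, rfl⟩ := by
        by_contra hc
        push_neg at hc
        exact hz (funext hc)
      obtain ⟨e, he⟩ := hne
      refine Finset.prod_eq_zero (Finset.mem_univ (f e)) ?_
      rw [hC, if_neg]
      intro hall
      exact he ((hall ⟨e, rfl⟩).symm)
    · intro h'
      exact absurd (Finset.mem_univ _) h'
  have hbij : Function.Bijective
      (fun (p : (v : V) → ((e : {e : E // f e = v}) → Fin (d e.1))) =>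
        (fun e => p (f e) ⟨e, rfl⟩ : (e : E) → Fin (d e))) := by
    constructor
    · intro p p' hpp
      funext v e
      obtain ⟨e, he⟩ := e
      subst he
      exact congrFun hpp e
    · intro z
      exact ⟨fun v e => z e.1, rfl⟩
  simp only [key]
  exact Fintype.sum_bijective _ hbij _ _ (fun p => rfl)
end
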